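/- Let d ≥ 2 and let Y be the discrete-time simple random walk on ℤ^d started at 0. For ρ > 0 let W_ρ = Y(T_ρ), where T_ρ = min{k ∈ ℕ : |Y(k)| > ρ} is the first exit time from the ball of radius ρ. Then for every ξ ∈ ℝ^d and any sequences ρ_n → ∞ and h_n → ∞, lim_{n→∞} h_n² (1 − E[exp(−ξ · W_{ρ_n} / (ρ_n h_n))]) = −|ξ|² / (2d). -/

import Mathlib

open MeasureTheory ProbabilityTheory Filter Set
open scoped ENNReal NNReal

/-- Euclidean norm of a point of `ℤ^d`. -/
noncomputable def znorm {d : ℕ} (x : Fin d → ℤ) : ℝ :=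
  Real.sqrt (∑ i, ((x i : ℝ)) ^ 2)

/-- The unit step of the simple random walk indexed by a coordinate and a sign. -/
def stepVec (d : ℕ) (p : Fin d × Bool) : Fin d → ℤ :=
  fun j => if j = p.1 then (if p.2 then 1 else -1) else 0

/-- `Y` is a simple random walk on `ℤ^d` started at `0` under `P`. -/
structure IsSRW {Ω : Type*} [MeasurableSpace Ω] (P : Measure Ω) (d : ℕ)
    (Y : ℕ → Ω → (Fin d → ℤ)) : Prop where
  meas : ∀ k, Measurable (Y k)
  init : ∀ ω, Y 0 ω = 0
  indep : iIndepFun (fun k ω => Y (k + 1) ω - Y k ω) P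
  step : ∀ k p, P {ω | Y (k + 1) ω - Y k ω = stepVec d p} = (2 * d : ℝ≥0∞)⁻¹

/-- i.i.d. heavy-tailed random environment on `ℤ^d`. -/
structure IsEnv {Ω : Type*} [MeasurableSpace Ω] (P : Measure Ω) (d : ℕ) (α : ℝ)
    (L : ℝ → ℝ) (τ : (Fin d → ℤ) → Ω → ℝ) : Prop where
  meas : ∀ x, Measurable (τ x)
  pos : ∀ x ω, 0 < τ x ω
  indep : iIndepFun τ P
  tail : ∀ x u, (1 : ℝ) ≤ u → P {ω | u ≤ τ x ω} = ENNReal.ofReal (u ^ (-α) * (1 + L u))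
  decay : Tendsto L atTop (nhds 0)

noncomputable def gscale (α : ℝ) (n : ℕ) : ℝ := (2 : ℝ) ^ ((n : ℝ) / α)
noncomputable def rscale (n : ℕ) : ℝ := (2 : ℝ) ^ ((n : ℝ) / 2)
noncomputable def rhoscale (d n : ℕ) : ℝ := (2 : ℝ) ^ ((1 - 1 / (3 * (d : ℝ))) * n / 2)
noncomputable def nuscale (d n : ℕ) : ℝ := (2 : ℝ) ^ ((1 / (d : ℝ)) * n / 2)
noncomputable def iotascale (d n : ℕ) : ℝ := (2 : ℝ) ^ ((1 - 2 / (3 * (d : ℝ))) * n / 2)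
noncomputable def hscale (d n : ℕ) : ℝ := rscale n / rhoscale d n

/-- the big ball `𝔻(n)` of radius `m · r(n)`. -/
def bigD (d m n : ℕ) : Set (Fin d → ℤ) := {x | znorm x ≤ m * rscale n}

/-- the cube of side `ℓ` centered at `x`. -/
def cube {d : ℕ} (x : Fin d → ℤ) (ℓ : ℝ) : Set (Fin d → ℤ) :=
  {y | ∀ i, |((y i : ℝ)) - ((x i : ℝ))| ≤ ℓ / 2}

/-- the set of deep traps `T_ε^M(n)`. -/
noncomputable def traps {Ω : Type*} {d : ℕ} (τ : (Fin d → ℤ) → Ω → ℝ) (α : ℝ) (m : ℕ)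
    (ε M : ℝ) (n : ℕ) (ω : Ω) : Set (Fin d → ℤ) :=
  {x ∈ bigD d m n | ε * gscale α n ≤ τ x ω ∧ τ x ω < M * gscale α n}

/-- the set `ℰ(n)` of sites far from all deep traps. -/
noncomputable def calE {Ω : Type*} {d : ℕ} (τ : (Fin d → ℤ) → Ω → ℝ) (α : ℝ) (m : ℕ)
    (ε M : ℝ) (n : ℕ) (ω : Ω) : Set (Fin d → ℤ) :=
  {x ∈ bigD d m n | ∀ y ∈ traps τ α m ε M n ω, nuscale d n < znorm (x - y)}

/-- the set `ℰ₀(n)` of sites of `ℰ(n)` far from the boundary of `𝔻(n)`. -/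
noncomputable def calE₀ {Ω : Type*} {d : ℕ} (τ : (Fin d → ℤ) → Ω → ℝ) (α : ℝ) (m : ℕ)
    (ε M : ℝ) (n : ℕ) (ω : Ω) : Set (Fin d → ℤ) :=
  {x ∈ calE τ α m ε M n ω | ∀ y, y ∉ bigD d m n → rhoscale d n < znorm (x - y)}


/-- first exit time of the walk from the ball of radius `ρ` around the origin. -/
noncomputable def exitTime {Ω : Type*} {d : ℕ} (Y : ℕ → Ω → (Fin d → ℤ)) (ρ : ℝ) (ω : Ω) : ℕ :=
  sInf {k | ρ < znorm (Y k ω)}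


section znormlemmas
variable {d : ℕ}

/-- embedding into Euclidean space -/
noncomputable def toE {d : ℕ} (x : Fin d → ℤ) : EuclideanSpace ℝ (Fin d) := WithLp.toLp 2 (fun i => (x i : ℝ))

lemma znorm_eq_norm (x : Fin d → ℤ) : znorm x = ‖toE x‖ := by
  rw [EuclideanSpace.norm_eq]
  unfold znorm
  congr 1
  refine Finset.sum_congr rfl fun i _ => ?_
  rw [Real.norm_eq_abs, sq_abs]; rfl

lemma toE_sub (a b : Fin d → ℤ) : toE (a - b) = toE a - toE b := by
  ext i; simp [toE]

lemma znorm_nonneg (x : Fin d → ℤ) : 0 ≤ znorm x := Real.sqrt_nonneg _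

lemma znorm_zero : znorm (0 : Fin d → ℤ) = 0 := by simp [znorm]

lemma znorm_sq (x : Fin d → ℤ) : znorm x ^ 2 = ∑ i, ((x i : ℝ)) ^ 2 := by
  rw [znorm, Real.sq_sqrt]
  positivity

lemma abs_coord_le_znorm (x : Fin d → ℤ) (i : Fin d) : |((x i : ℝ))| ≤ znorm x := by
  rw [znorm]
  rw [← Real.sqrt_sq_eq_abs]
  apply Real.sqrt_le_sqrt
  exact Finset.single_le_sum (f := fun j => ((x j : ℝ))^2) (fun j _ => by positivity) (Finset.mem_univ i)

lemma znorm_stepVec (p : Fin d × Bool) : znorm (stepVec d p) = 1 := by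
  rw [znorm]
  have : ∑ i, ((stepVec d p i : ℝ))^2 = 1 := by
    rw [Finset.sum_eq_single p.1]
    · simp only [stepVec, if_pos rfl]; cases p.2 <;> norm_num
    · intro j _ hj; simp [stepVec, hj]
    · intro h; exact absurd (Finset.mem_univ _) h
  rw [this, Real.sqrt_one]

lemma znorm_add_step_le (a s : Fin d → ℤ) (q : Fin d × Bool) (hs : s - a = stepVec d q) :
    znorm s ≤ znorm a + 1 := by
  have : znorm (s - a) = 1 := by rw [hs, znorm_stepVec]
  calc znorm s = ‖toE s‖ := znorm_eq_norm s
    _ = ‖toE a + (toE s - toE a)‖ := by congr 1; abel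
    _ ≤ ‖toE a‖ + ‖toE s - toE a‖ := norm_add_le _ _
    _ = znorm a + znorm (s - a) := by rw [← znorm_eq_norm, ← toE_sub, ← znorm_eq_norm]
    _ = znorm a + 1 := by rw [this]

lemma abs_dot_le (ξ : Fin d → ℝ) (x : Fin d → ℤ) :
    |∑ i, ξ i * ((x i : ℝ))| ≤ Real.sqrt (∑ i, ξ i ^ 2) * znorm x := by
  have h := abs_real_inner_le_norm (WithLp.toLp 2 ξ) (toE x)
  simp only [PiLp.inner_apply, RCLike.inner_apply, conj_trivial, PiLp.toLp_apply,
    EuclideanSpace.norm_eq, Real.norm_eq_abs, sq_abs] at h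
  rw [znorm_eq_norm, EuclideanSpace.norm_eq]
  simpa [toE, Real.norm_eq_abs, sq_abs, mul_comm] using h

lemma stepVec_injective {d : ℕ} : Function.Injective (stepVec d) := by
  rintro ⟨i, b⟩ ⟨j, c⟩ hpq
  have h1 := congrFun hpq i
  simp only [stepVec, if_pos rfl] at h1
  by_cases hij : i = j
  · subst hij
    simp only [if_pos rfl] at h1
    have : b = c := by cases b <;> cases c <;> simp_all
    simp [this]
  · rw [if_neg hij] at h1
    cases b <;> simp_all

set_option linter.unusedSectionVars false
section SRW
variable {Ω : Type*} [MeasurableSpace Ω] {P : Measure Ω} [IsProbabilityMeasure P]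
variable {d : ℕ} {Y : ℕ → Ω → (Fin d → ℤ)}

/-- path built from a finite step sequence -/
def pathF {d : ℕ} {N : ℕ} (p : Fin N → Fin d × Bool) (k : ℕ) : Fin d → ℤ :=
  ∑ j : Fin N, if (j : ℕ) < k then stepVec d (p j) else 0

lemma pathF_zero {N : ℕ} (p : Fin N → Fin d × Bool) : pathF p 0 = 0 := by simp [pathF]

lemma pathF_succ {N : ℕ} (p : Fin N → Fin d × Bool) {k : ℕ} (hk : k < N) :
    pathF p (k + 1) = pathF p k + stepVec d (p ⟨k, hk⟩) := by
  unfold pathF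
  have key : ∀ j : Fin N, (if (j : ℕ) < k + 1 then stepVec d (p j) else 0)
      = (if (j : ℕ) < k then stepVec d (p j) else 0)
        + (if j = ⟨k, hk⟩ then stepVec d (p j) else 0) := by
    intro j
    by_cases h2 : (j : ℕ) = k
    · have hj : j = ⟨k, hk⟩ := Fin.ext h2
      rw [if_pos (by omega), if_neg (by omega), if_pos hj, zero_add]
    · have hj : j ≠ ⟨k, hk⟩ := fun he => h2 (by rw [he])
      by_cases h1 : (j : ℕ) < k
      · rw [if_pos (by omega), if_pos h1, if_neg hj, add_zero]
      · rw [if_neg (by omega), if_neg h1, if_neg hj, add_zero]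
  rw [Finset.sum_congr rfl fun j _ => key j, Finset.sum_add_distrib,
    Finset.sum_ite_eq' Finset.univ (⟨k, hk⟩ : Fin N) (fun j => stepVec d (p j))]
  simp

/-- event that the first `N` steps follow the sequence `p` -/
def EvF (Y : ℕ → Ω → (Fin d → ℤ)) {N : ℕ} (p : Fin N → Fin d × Bool) : Set Ω :=
  {ω | ∀ j : Fin N, Y ((j : ℕ) + 1) ω - Y (j : ℕ) ω = stepVec d (p j)}

lemma measurableSet_EvF (hY : IsSRW P d Y) {N : ℕ} (p : Fin N → Fin d × Bool) :
    MeasurableSet (EvF Y p) := by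
  have : EvF Y p = ⋂ j : Fin N,
      ((fun ω => Y ((j : ℕ) + 1) ω - Y (j : ℕ) ω) ⁻¹' {stepVec d (p j)}) := by
    ext ω; simp [EvF]
  rw [this]
  exact MeasurableSet.iInter fun j =>
    ((hY.meas _).sub (hY.meas _)) MeasurableSet.of_discrete

lemma meas_EvF (hY : IsSRW P d Y) {N : ℕ} (p : Fin N → Fin d × Bool) :
    P (EvF Y p) = (2 * d : ℝ≥0∞)⁻¹ ^ N := by
  classical
  have h := hY.indep.measure_inter_preimage_eq_mul (Finset.range N)
    (sets := fun i => if h : i < N then {stepVec d (p ⟨i, h⟩)} else Set.univ)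
    (fun i _ => MeasurableSet.of_discrete)
  have hset : EvF Y p = ⋂ i ∈ Finset.range N, ((fun ω => Y (i + 1) ω - Y i ω) ⁻¹'
      (if h : i < N then {stepVec d (p ⟨i, h⟩)} else Set.univ)) := by
    ext ω
    simp only [EvF, Set.mem_setOf_eq, Set.mem_iInter, Finset.mem_range]
    constructor
    · intro hω i hi
      rw [dif_pos hi]
      exact hω ⟨i, hi⟩
    · intro hω j
      have := hω (j : ℕ) j.2
      rw [dif_pos j.2] at this
      simpa using this
  rw [hset, h]
  calc ∏ i ∈ Finset.range N, P ((fun ω => Y (i + 1) ω - Y i ω) ⁻¹'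
        (if h : i < N then {stepVec d (p ⟨i, h⟩)} else Set.univ))
      = ∏ _i ∈ Finset.range N, (2 * d : ℝ≥0∞)⁻¹ := by
        refine Finset.prod_congr rfl fun i hi => ?_
        rw [dif_pos (Finset.mem_range.mp hi)]
        exact hY.step i _
    _ = (2 * d : ℝ≥0∞)⁻¹ ^ N := by rw [Finset.prod_const, Finset.card_range]

lemma EvF_disjoint {N : ℕ} {p q : Fin N → Fin d × Bool} (hpq : p ≠ q) :
    Disjoint (EvF Y p) (EvF Y q) := by
  rw [Set.disjoint_left]
  intro ω hp hq
  apply hpq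
  funext j
  exact stepVec_injective ((hp j).symm.trans (hq j))

lemma meas_union_EvF (hY : IsSRW P d Y) (hd : 0 < d) (N : ℕ) :
    P (⋃ p : Fin N → Fin d × Bool, EvF Y p) = 1 := by
  classical
  rw [measure_iUnion (fun p q hpq => EvF_disjoint hpq) (fun p => measurableSet_EvF hY p)]
  rw [tsum_fintype]
  simp_rw [meas_EvF hY]
  rw [Finset.sum_const, Finset.card_univ]
  have hcard : Fintype.card (Fin N → Fin d × Bool) = (2 * d) ^ N := by
    simp [Fintype.card_fun, Fintype.card_prod, mul_comm]
  rw [hcard, nsmul_eq_mul]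
  push_cast
  rw [← mul_pow, ENNReal.mul_inv_cancel (mul_ne_zero (by norm_num) (by exact_mod_cast hd.ne')) (by finiteness), one_pow]

lemma EvF_path (hY : IsSRW P d Y) {N : ℕ} {p : Fin N → Fin d × Bool} {ω : Ω}
    (hω : ω ∈ EvF Y p) : ∀ k, k ≤ N → Y k ω = pathF p k := by
  intro k
  induction k with
  | zero => intro _; rw [hY.init, pathF_zero]
  | succ k ih =>
    intro hk
    have hkN : k < N := hk
    rw [pathF_succ p hkN, ← ih (le_of_lt hkN)]
    have h2 := hω ⟨k, hkN⟩
    have : Y (k + 1) ω = Y k ω + (Y (k + 1) ω - Y k ω) := by abel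
    rw [this, h2]

lemma measurable_pathfun (hY : IsSRW P d Y) (N : ℕ) (G : (ℕ → (Fin d → ℤ)) → ℝ)
    (hG : ∀ y y' : ℕ → (Fin d → ℤ), (∀ k, k ≤ N → y k = y' k) → G y = G y') :
    Measurable (fun ω => G (fun k => Y k ω)) := by
  have heq : (fun ω => G (fun k => Y k ω))
      = (fun v : Fin (N + 1) → (Fin d → ℤ) =>
          G (fun k => if h : k ≤ N then v ⟨k, by omega⟩ else 0))
        ∘ (fun ω (j : Fin (N + 1)) => Y (j : ℕ) ω) := by
    funext ω
    exact hG _ _ (fun k hk => by simp [dif_pos hk])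
  rw [heq]
  exact Measurable.of_discrete.comp (measurable_pi_lambda _ (fun j => hY.meas (j : ℕ)))

lemma srw_sum (hY : IsSRW P d Y) (hd : 0 < d) (N : ℕ) (G : (ℕ → (Fin d → ℤ)) → ℝ)
    (hG : ∀ y y' : ℕ → (Fin d → ℤ), (∀ k, k ≤ N → y k = y' k) → G y = G y') :
    ∫ ω, G (fun k => Y k ω) ∂P
      = ∑ p : Fin N → Fin d × Bool, ((2 * d : ℝ))⁻¹ ^ N * G (pathF p) := by
  classical
  have hae : ∀ᵐ ω ∂P, ω ∈ ⋃ p : Fin N → Fin d × Bool, EvF Y p := by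
    rw [ae_iff]
    have hc : P ((⋃ p : Fin N → Fin d × Bool, EvF Y p)ᶜ) = 0 := by
      rw [measure_compl (MeasurableSet.iUnion fun p => measurableSet_EvF hY p)
        (measure_ne_top _ _), meas_union_EvF hY hd N]
      simp
    exact hc
  have heq : ∀ᵐ ω ∂P, G (fun k => Y k ω)
      = ∑ p : Fin N → Fin d × Bool, Set.indicator (EvF Y p) (fun _ => G (pathF p)) ω := by
    filter_upwards [hae] with ω hω
    obtain ⟨p₀, hp₀⟩ := Set.mem_iUnion.mp hω
    rw [Finset.sum_eq_single p₀]
    · rw [Set.indicator_of_mem hp₀]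
      exact hG _ _ (fun k hk => EvF_path hY hp₀ k hk)
    · intro q _ hq
      rw [Set.indicator_of_notMem]
      exact fun hmem => Set.disjoint_left.mp (EvF_disjoint hq) hmem hp₀
    · intro h; exact absurd (Finset.mem_univ _) h
  rw [integral_congr_ae heq,
    integral_finset_sum _ (fun p _ => (integrable_const _).indicator (measurableSet_EvF hY p))]
  refine Finset.sum_congr rfl fun p _ => ?_
  rw [integral_indicator_const _ (measurableSet_EvF hY p), measureReal_def, meas_EvF hY p, smul_eq_mul]
  congr 1
  rw [ENNReal.toReal_pow, ENNReal.toReal_inv]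
  norm_num

end SRW

section Exit
variable {Ω : Type*} [MeasurableSpace Ω] {P : Measure Ω} [IsProbabilityMeasure P]
variable {d : ℕ} {Y : ℕ → Ω → (Fin d → ℤ)}

def noExit (Y : ℕ → Ω → (Fin d → ℤ)) (ρ : ℝ) (N : ℕ) : Set Ω :=
  {ω | ∀ k, k ≤ N → znorm (Y k ω) ≤ ρ}

def emb (m K : ℕ) (j : Fin K) (t : Fin m) : Fin (m * K) :=
  ⟨m * (j : ℕ) + (t : ℕ), by
    have hj := j.isLt
    have ht := t.isLt
    calc m * (j : ℕ) + (t : ℕ) < m * (j : ℕ) + m := by omega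
      _ = m * ((j : ℕ) + 1) := by ring
      _ ≤ m * K := Nat.mul_le_mul_left m hj⟩

lemma stay_block (hd : 0 < d) {ρ : ℝ} {m K : ℕ} (hm : 2 * ρ < (m : ℝ))
    {p : Fin (m * K) → Fin d × Bool} (hp : ∀ k, k ≤ m * K → znorm (pathF p k) ≤ ρ)
    (j : Fin K) : ∃ t : Fin m, p (emb m K j t) ≠ (⟨0, hd⟩, true) := by
  by_contra hcon
  push_neg at hcon
  have hstep : ∀ i, i ≤ m → pathF p (m * (j : ℕ) + i)
      = pathF p (m * (j : ℕ)) + (i : ℤ) • stepVec d (⟨0, hd⟩, true) := by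
    intro i
    induction i with
    | zero => intro _; simp
    | succ i ih =>
      intro hi
      have hidx : m * (j : ℕ) + i < m * K := (emb m K j ⟨i, by omega⟩).isLt
      rw [show m * (j : ℕ) + (i + 1) = (m * (j : ℕ) + i) + 1 by omega,
        pathF_succ p hidx, ih (by omega)]
      have hfin : (⟨m * (j : ℕ) + i, hidx⟩ : Fin (m * K)) = emb m K j ⟨i, by omega⟩ := rfl
      rw [hfin, hcon ⟨i, by omega⟩,
        show ((i + 1 : ℕ) : ℤ) = (i : ℤ) + 1 by push_cast; ring, add_smul, one_smul, add_assoc]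
  have hjK : m * (j : ℕ) ≤ m * K := Nat.mul_le_mul_left m (le_of_lt j.isLt)
  have hjK2 : m * (j : ℕ) + m ≤ m * K := by
    calc m * (j : ℕ) + m = m * ((j : ℕ) + 1) := by ring
      _ ≤ m * K := Nat.mul_le_mul_left m j.isLt
  have h1 := hp (m * (j : ℕ)) hjK
  have h2 := hp (m * (j : ℕ) + m) hjK2
  rw [hstep m le_rfl] at h2
  set x := pathF p (m * (j : ℕ)) with hx
  have e1 : |((x ⟨0, hd⟩ : ℤ) : ℝ)| ≤ ρ := le_trans (abs_coord_le_znorm _ _) h1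
  have e2' : ((x + (m : ℤ) • stepVec d (⟨0, hd⟩, true)) ⟨0, hd⟩) = x ⟨0, hd⟩ + m := by
    simp [stepVec]
  have e2 : |((x ⟨0, hd⟩ : ℤ) : ℝ) + (m : ℝ)| ≤ ρ := by
    have h3 := le_trans (abs_coord_le_znorm (x + (m : ℤ) • stepVec d (⟨0, hd⟩, true)) ⟨0, hd⟩) h2
    rw [e2'] at h3
    push_cast at h3
    exact h3
  have a1 := abs_le.mp e1
  have a2 := abs_le.mp e2
  have : (m : ℝ) ≤ 2 * ρ := by linarith [a1.1, a1.2, a2.1, a2.2]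
  linarith

lemma card_stay_le (hd : 0 < d) {ρ : ℝ} (hρ : 0 ≤ ρ) (m K : ℕ) (hm : 2 * ρ < (m : ℝ)) :
    (Finset.univ.filter
        (fun p : Fin (m * K) → Fin d × Bool => ∀ k, k ≤ m * K → znorm (pathF p k) ≤ ρ)).card
      ≤ ((2 * d) ^ m - 1) ^ K := by
  classical
  have hm0 : 0 < m := by
    rcases Nat.eq_zero_or_pos m with h | h
    · subst h; norm_num at hm; linarith
    · exact h
  set a₀ : Fin d × Bool := (⟨0, hd⟩, true)
  set T : Finset (Fin K → (Fin m → Fin d × Bool)) :=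
    Fintype.piFinset (fun _ : Fin K => Finset.univ.erase (fun _ : Fin m => a₀)) with hT
  have hinj : ∀ p ∈ Finset.univ.filter
      (fun p : Fin (m * K) → Fin d × Bool => ∀ k, k ≤ m * K → znorm (pathF p k) ≤ ρ),
      (fun (p : Fin (m * K) → Fin d × Bool) (j : Fin K) (t : Fin m) => p (emb m K j t)) p ∈ T := by
    intro p hp
    rw [Finset.mem_filter] at hp
    rw [hT, Fintype.mem_piFinset]
    intro j
    rw [Finset.mem_erase]
    refine ⟨?_, Finset.mem_univ _⟩
    obtain ⟨t, ht⟩ := stay_block hd hm hp.2 j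
    exact fun hc => ht (congrFun hc t)
  have hcardT : T.card = ((2 * d) ^ m - 1) ^ K := by
    rw [hT, Fintype.card_piFinset]
    have : ∀ j : Fin K, (Finset.univ.erase (fun _ : Fin m => a₀)).card = (2 * d) ^ m - 1 := by
      intro j
      rw [Finset.card_erase_of_mem (Finset.mem_univ _), Finset.card_univ]
      congr 1
      simp [Fintype.card_fun, Fintype.card_prod, mul_comm]
    rw [Finset.prod_congr rfl (fun j _ => this j), Finset.prod_const, Finset.card_univ,
      Fintype.card_fin]
  rw [← hcardT]
  apply Finset.card_le_card_of_injOn _ hinj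
  intro p hp q hq hpq
  funext i
  have hi := i.isLt
  have hjlt : (i : ℕ) / m < K := Nat.div_lt_of_lt_mul (by omega)
  have htlt : (i : ℕ) % m < m := Nat.mod_lt _ hm0
  have hemb : emb m K ⟨(i : ℕ) / m, hjlt⟩ ⟨(i : ℕ) % m, htlt⟩ = i := by
    apply Fin.ext
    exact Nat.div_add_mod _ _
  have h5 := congrFun (congrFun hpq ⟨(i : ℕ) / m, hjlt⟩) ⟨(i : ℕ) % m, htlt⟩
  rw [← hemb]
  exact h5

lemma measurableSet_noExit (hY : IsSRW P d Y) (ρ : ℝ) (N : ℕ) :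
    MeasurableSet (noExit Y ρ N) := by
  have : noExit Y ρ N = ⋂ k, ⋂ _h : k ≤ N, (Y k) ⁻¹' {v | znorm v ≤ ρ} := by
    ext ω; simp [noExit]
  rw [this]
  exact MeasurableSet.iInter fun k => MeasurableSet.iInter fun _ =>
    (hY.meas k) MeasurableSet.of_discrete

lemma noExit_meas_le (hY : IsSRW P d Y) (hd : 0 < d) {ρ : ℝ} (hρ : 0 ≤ ρ) {m : ℕ} (K : ℕ)
    (hm : 2 * ρ < (m : ℝ)) :
    P (noExit Y ρ (m * K))
      ≤ ((((2 * d) ^ m - 1 : ℕ) : ℝ≥0∞) * ((2 * d : ℝ≥0∞))⁻¹ ^ m) ^ K := by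
  classical
  set S : Finset (Fin (m * K) → Fin d × Bool) := Finset.univ.filter
    (fun p => ∀ k, k ≤ m * K → znorm (pathF p k) ≤ ρ) with hS
  have hsub : noExit Y ρ (m * K) ⊆
      (⋃ p ∈ S, EvF Y p) ∪ (⋃ p : Fin (m * K) → Fin d × Bool, EvF Y p)ᶜ := by
    intro ω hω
    by_cases hmem : ω ∈ ⋃ p : Fin (m * K) → Fin d × Bool, EvF Y p
    · left
      obtain ⟨p, hp⟩ := Set.mem_iUnion.mp hmem
      have hpS : p ∈ S := by
        rw [hS, Finset.mem_filter]
        refine ⟨Finset.mem_univ _, fun k hk => ?_⟩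
        rw [← EvF_path hY hp k hk]
        exact hω k hk
      exact Set.mem_biUnion hpS hp
    · right; exact hmem
  calc P (noExit Y ρ (m * K))
      ≤ P ((⋃ p ∈ S, EvF Y p) ∪ (⋃ p : Fin (m * K) → Fin d × Bool, EvF Y p)ᶜ) :=
        measure_mono hsub
    _ ≤ P (⋃ p ∈ S, EvF Y p) + P ((⋃ p : Fin (m * K) → Fin d × Bool, EvF Y p)ᶜ) :=
        measure_union_le _ _
    _ = P (⋃ p ∈ S, EvF Y p) := by
        rw [measure_compl (MeasurableSet.iUnion fun p => measurableSet_EvF hY p)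
          (measure_ne_top _ _), meas_union_EvF hY hd, measure_univ, tsub_self, add_zero]
    _ ≤ ∑ p ∈ S, P (EvF Y p) := measure_biUnion_finset_le _ _
    _ = (S.card : ℝ≥0∞) * (2 * d : ℝ≥0∞)⁻¹ ^ (m * K) := by
        rw [Finset.sum_congr rfl (fun p _ => meas_EvF hY p), Finset.sum_const, nsmul_eq_mul]
    _ ≤ ((((2 * d) ^ m - 1) ^ K : ℕ) : ℝ≥0∞) * (2 * d : ℝ≥0∞)⁻¹ ^ (m * K) :=
        mul_le_mul_left (by exact_mod_cast card_stay_le hd hρ m K hm) _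
    _ = ((((2 * d) ^ m - 1 : ℕ) : ℝ≥0∞) * ((2 * d : ℝ≥0∞))⁻¹ ^ m) ^ K := by
        rw [Nat.cast_pow, pow_mul, ← mul_pow]

end Exit

section ExitLimits
variable {Ω : Type*} [MeasurableSpace Ω] {P : Measure Ω} [IsProbabilityMeasure P]
variable {d : ℕ} {Y : ℕ → Ω → (Fin d → ℤ)}

lemma noExit_tendsto (hY : IsSRW P d Y) (hd : 0 < d) {ρ : ℝ} (hρ : 0 ≤ ρ) :
    Tendsto (fun N => P (noExit Y ρ N)) atTop (nhds 0) := by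
  set m : ℕ := ⌊2 * ρ⌋₊ + 1 with hmdef
  have hm2 : 2 * ρ < (m : ℝ) := by
    rw [hmdef]; push_cast
    exact Nat.lt_floor_add_one _
  have hm0 : 0 < m := Nat.succ_pos _
  set r : ℝ≥0∞ := (((2 * d) ^ m - 1 : ℕ) : ℝ≥0∞) * ((2 * d : ℝ≥0∞))⁻¹ ^ m with hrdef
  have hb0 : ((2 * d : ℝ≥0∞)) ^ m ≠ 0 := by
    apply pow_ne_zero
    exact mul_ne_zero (by norm_num) (by exact_mod_cast hd.ne')
  have hbt : ((2 * d : ℝ≥0∞)) ^ m ≠ ⊤ := ENNReal.pow_ne_top (by finiteness)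
  have hrlt : r < 1 := by
    rw [hrdef, ← ENNReal.inv_pow, ← div_eq_mul_inv,
      ENNReal.div_lt_iff (Or.inl hb0) (Or.inl hbt), one_mul]
    have : ((2 * d : ℝ≥0∞)) ^ m = (((2 * d) ^ m : ℕ) : ℝ≥0∞) := by push_cast; ring
    rw [this]
    exact_mod_cast Nat.sub_lt (pow_pos (by omega) m) one_pos
  have hb : ∀ N, P (noExit Y ρ N) ≤ r ^ (N / m) := by
    intro N
    have h1 : noExit Y ρ N ⊆ noExit Y ρ (m * (N / m)) := by
      intro ω hω k hk
      exact hω k (le_trans hk (by rw [mul_comm]; exact Nat.div_mul_le_self N m))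
    exact le_trans (measure_mono h1) (noExit_meas_le hY hd hρ (N / m) hm2)
  have hdiv : Tendsto (fun N : ℕ => N / m) atTop atTop :=
    tendsto_atTop_atTop.mpr fun b => ⟨b * m, fun N hN => (Nat.le_div_iff_mul_le hm0).mpr hN⟩
  have hto : Tendsto (fun N : ℕ => r ^ (N / m)) atTop (nhds 0) :=
    (ENNReal.tendsto_pow_atTop_nhds_zero_of_lt_one hrlt).comp hdiv
  exact tendsto_of_tendsto_of_tendsto_of_le_of_le tendsto_const_nhds hto
    (fun N => zero_le) hb

lemma noExit_toReal_tendsto (hY : IsSRW P d Y) (hd : 0 < d) {ρ : ℝ} (hρ : 0 ≤ ρ) :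
    Tendsto (fun N => (P (noExit Y ρ N)).toReal) atTop (nhds 0) := by
  have h := (ENNReal.tendsto_toReal (a := 0) (by simp)).comp (noExit_tendsto hY hd hρ)
  simpa [Function.comp_def] using h

lemma exit_ae (hY : IsSRW P d Y) (hd : 0 < d) {ρ : ℝ} (hρ : 0 ≤ ρ) :
    ∀ᵐ ω ∂P, ∃ k, ρ < znorm (Y k ω) := by
  rw [ae_iff]
  have hsub : ∀ N, {ω | ¬ ∃ k, ρ < znorm (Y k ω)} ⊆ noExit Y ρ N := by
    intro N ω hω k _
    push_neg at hω
    exact hω k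
  have h0 : P {ω | ¬ ∃ k, ρ < znorm (Y k ω)} ≤ 0 :=
    ge_of_tendsto' (noExit_tendsto hY hd hρ) (fun N => measure_mono (hsub N))
  exact le_antisymm h0 zero_le

end ExitLimits

section ExitIntegral
variable {Ω : Type*} [MeasurableSpace Ω] {P : Measure Ω} [IsProbabilityMeasure P]
variable {d : ℕ} {Y : ℕ → Ω → (Fin d → ℤ)}

lemma integrable_of_bdd {f : Ω → ℝ} (hm : Measurable f) {C : ℝ} (hb : ∀ᵐ ω ∂P, |f ω| ≤ C) :
    Integrable f P :=
  ⟨hm.aestronglyMeasurable, HasFiniteIntegral.of_bounded (C := C) (by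
    filter_upwards [hb] with ω h using by rwa [Real.norm_eq_abs])⟩

lemma nat_sInf_eq_iff {S : Set ℕ} {k : ℕ} :
    sInf S = k ↔ (k ∈ S ∧ ∀ j, j < k → j ∉ S) ∨ (k = 0 ∧ ∀ j, j ∉ S) := by
  constructor
  · intro hk
    by_cases hne : S.Nonempty
    · left
      subst hk
      exact ⟨Nat.sInf_mem hne, fun j hj => Nat.notMem_of_lt_sInf hj⟩
    · right
      rw [Set.not_nonempty_iff_eq_empty] at hne
      subst hne
      rw [Nat.sInf_empty] at hk
      exact ⟨hk.symm, fun j => Set.notMem_empty j⟩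
  · rintro (⟨hmem, hbelow⟩ | ⟨hk0, hempty⟩)
    · refine le_antisymm (Nat.sInf_le hmem) ?_
      by_contra hlt
      push_neg at hlt
      exact hbelow _ hlt (Nat.sInf_mem ⟨k, hmem⟩)
    · subst hk0
      rw [Set.eq_empty_iff_forall_notMem.mpr hempty]
      exact Nat.sInf_empty

lemma measurable_exitTime (hY : IsSRW P d Y) (ρ : ℝ) : Measurable (exitTime Y ρ) := by
  apply measurable_to_countable'
  intro k
  have hA : ∀ j, MeasurableSet {ω | ρ < znorm (Y j ω)} := fun j =>
    (hY.meas j) (MeasurableSet.of_discrete (s := {v | ρ < znorm v}))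
  have hset : exitTime Y ρ ⁻¹' {k}
      = ({ω | ρ < znorm (Y k ω)} ∩ ⋂ j, ⋂ _ : j < k, {ω | ρ < znorm (Y j ω)}ᶜ)
        ∪ ({ω | k = 0} ∩ ⋂ j, {ω | ρ < znorm (Y j ω)}ᶜ) := by
    ext ω
    rw [Set.mem_preimage, Set.mem_singleton_iff,
      show exitTime Y ρ ω = sInf {j | ρ < znorm (Y j ω)} from rfl, nat_sInf_eq_iff]
    simp only [Set.mem_union, Set.mem_inter_iff, Set.mem_iInter, Set.mem_compl_iff,
      Set.mem_setOf_eq] <;> tauto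
  rw [hset]
  exact ((hA k).inter (MeasurableSet.iInter fun j =>
      MeasurableSet.iInter fun _ => (hA j).compl)).union
    ((MeasurableSet.const _).inter (MeasurableSet.iInter fun j => (hA j).compl))

lemma measurable_W (hY : IsSRW P d Y) (ρ : ℝ) :
    Measurable (fun ω => Y (exitTime Y ρ ω) ω) := by
  apply measurable_to_countable'
  intro x
  have hset : (fun ω => Y (exitTime Y ρ ω) ω) ⁻¹' {x}
      = ⋃ k, (exitTime Y ρ ⁻¹' {k}) ∩ (Y k ⁻¹' {x}) := by
    ext ω
    simp only [Set.mem_preimage, Set.mem_singleton_iff, Set.mem_iUnion, Set.mem_inter_iff]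
    constructor
    · intro h; exact ⟨exitTime Y ρ ω, rfl, h⟩
    · rintro ⟨k, hk, h⟩; rw [← hk] at h; exact h
  rw [hset]
  exact MeasurableSet.iUnion fun k =>
    (measurable_exitTime hY ρ (MeasurableSet.singleton k)).inter
      ((hY.meas k) (MeasurableSet.singleton x))

/-- the exit functional on paths -/
noncomputable def exitG {d : ℕ} (ρ : ℝ) (N : ℕ) (g : (Fin d → ℤ) → ℝ)
    (y : ℕ → (Fin d → ℤ)) : ℝ :=
  if ∃ k, k ≤ N ∧ ρ < znorm (y k) then g (y (sInf {k | ρ < znorm (y k)})) else 0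

lemma exitG_congr {ρ : ℝ} {N : ℕ} {g : (Fin d → ℤ) → ℝ} {y y' : ℕ → (Fin d → ℤ)}
    (hyy : ∀ k, k ≤ N → y k = y' k) : exitG ρ N g y = exitG ρ N g y' := by
  unfold exitG
  have hiff : (∃ k, k ≤ N ∧ ρ < znorm (y k)) ↔ (∃ k, k ≤ N ∧ ρ < znorm (y' k)) := by
    constructor
    · rintro ⟨k, hk, h⟩; exact ⟨k, hk, by rwa [← hyy k hk]⟩
    · rintro ⟨k, hk, h⟩; exact ⟨k, hk, by rwa [hyy k hk]⟩
  by_cases hex : ∃ k, k ≤ N ∧ ρ < znorm (y k)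
  · rw [if_pos hex, if_pos (hiff.mp hex)]
    obtain ⟨k0, hk0N, hk0⟩ := hex
    have hk0' : ρ < znorm (y' k0) := by rwa [← hyy k0 hk0N]
    have hSle : sInf {k | ρ < znorm (y k)} ≤ N := le_trans (Nat.sInf_le hk0) hk0N
    have hS'le : sInf {k | ρ < znorm (y' k)} ≤ N := le_trans (Nat.sInf_le hk0') hk0N
    have hmem : sInf {k | ρ < znorm (y k)} ∈ {k | ρ < znorm (y k)} := Nat.sInf_mem ⟨k0, hk0⟩
    have hmem' : sInf {k | ρ < znorm (y' k)} ∈ {k | ρ < znorm (y' k)} := Nat.sInf_mem ⟨k0, hk0'⟩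
    have heq : sInf {k | ρ < znorm (y' k)} = sInf {k | ρ < znorm (y k)} := by
      apply le_antisymm
      · apply Nat.sInf_le
        show ρ < znorm (y' (sInf {k | ρ < znorm (y k)}))
        rw [← hyy _ hSle]
        exact hmem
      · apply Nat.sInf_le
        show ρ < znorm (y (sInf {k | ρ < znorm (y' k)}))
        rw [hyy _ hS'le]
        exact hmem'
    rw [heq, hyy _ hSle]
  · rw [if_neg hex, if_neg (fun h => hex (hiff.mpr h))]

lemma exit_integral_approx (hY : IsSRW P d Y) (hd : 0 < d) {ρ : ℝ} (N : ℕ)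
    (g : (Fin d → ℤ) → ℝ) {C : ℝ} (hg : ∀ x, |g x| ≤ C) :
    |∫ ω, g (Y (exitTime Y ρ ω) ω) ∂P
        - ∑ p : Fin N → Fin d × Bool, ((2 * d : ℝ))⁻¹ ^ N * exitG ρ N g (pathF p)|
      ≤ C * (P (noExit Y ρ N)).toReal := by
  have hsum := srw_sum hY hd N (exitG ρ N g) (fun y y' h => exitG_congr h)
  rw [← hsum]
  set f := fun ω => g (Y (exitTime Y ρ ω) ω) with hfdef
  set fN := fun ω => exitG ρ N g (fun k => Y k ω) with hfNdef
  have hfm : Measurable f := Measurable.of_discrete.comp (measurable_W hY ρ)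
  have hfNm : Measurable fN := measurable_pathfun hY N _ (fun y y' h => exitG_congr h)
  have hC0 : 0 ≤ C := le_trans (abs_nonneg _) (hg 0)
  have hfb : ∀ ω, |f ω| ≤ C := fun ω => hg _
  have hfNb : ∀ ω, |fN ω| ≤ C := by
    intro ω
    show |exitG ρ N g (fun k => Y k ω)| ≤ C
    unfold exitG
    split
    · exact hg _
    · simpa using hC0
  have hint_f : Integrable f P := integrable_of_bdd hfm (ae_of_all _ hfb)
  have hint_fN : Integrable fN P := integrable_of_bdd hfNm (ae_of_all _ hfNb)
  have hdiff : ∀ ω, |f ω - fN ω| ≤ Set.indicator (noExit Y ρ N) (fun _ => C) ω := by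
    intro ω
    by_cases hex : ∃ k, k ≤ N ∧ ρ < znorm (Y k ω)
    · have hfN : fN ω = f ω := by
        show exitG ρ N g (fun k => Y k ω) = g (Y (exitTime Y ρ ω) ω)
        unfold exitG
        rw [if_pos hex]
        rfl
      rw [hfN, sub_self, abs_zero]
      exact Set.indicator_nonneg (fun _ _ => hC0) ω
    · have hωmem : ω ∈ noExit Y ρ N := by
        intro k hk
        by_contra h
        push_neg at h
        exact hex ⟨k, hk, h⟩
      have hfN : fN ω = 0 := by
        show exitG ρ N g (fun k => Y k ω) = 0
        unfold exitG
        rw [if_neg hex]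
      rw [hfN, Set.indicator_of_mem hωmem, sub_zero]
      exact hfb ω
  calc |∫ ω, f ω ∂P - ∫ ω, fN ω ∂P| = |∫ ω, (f ω - fN ω) ∂P| := by
        rw [integral_sub hint_f hint_fN]
    _ ≤ ∫ ω, |f ω - fN ω| ∂P := by
        simpa [Real.norm_eq_abs] using norm_integral_le_integral_norm (μ := P) (fun ω => f ω - fN ω)
    _ ≤ ∫ ω, Set.indicator (noExit Y ρ N) (fun _ => C) ω ∂P :=
        integral_mono (hint_f.sub hint_fN).abs
          ((integrable_const C).indicator (measurableSet_noExit hY ρ N)) hdiff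
    _ = C * (P (noExit Y ρ N)).toReal := by
        rw [integral_indicator_const _ (measurableSet_noExit hY ρ N), smul_eq_mul, mul_comm, measureReal_def]

lemma srw_sym (hY : IsSRW P d Y) (hd : 0 < d) {ρ : ℝ} (hρ : 0 ≤ ρ)
    (σ : (Fin d → ℤ) → (Fin d → ℤ)) (hσinj : Function.Injective σ)
    (hσsub : ∀ a b, σ (a - b) = σ a - σ b) (hσ0 : σ 0 = 0)
    (hσn : ∀ x, znorm (σ x) = znorm x)
    (e : Equiv.Perm (Fin d × Bool)) (hσe : ∀ q, σ (stepVec d q) = stepVec d (e q))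
    (g : (Fin d → ℤ) → ℝ) {C : ℝ} (hg : ∀ x, |g x| ≤ C) :
    ∫ ω, g (σ (Y (exitTime Y ρ ω) ω)) ∂P = ∫ ω, g (Y (exitTime Y ρ ω) ω) ∂P := by
  set Y' : ℕ → Ω → (Fin d → ℤ) := fun k ω => σ (Y k ω) with hY'def
  have hY' : IsSRW P d Y' := by
    constructor
    · exact fun k => Measurable.of_discrete.comp (hY.meas k)
    · intro ω; rw [hY'def]; simp only [hY.init, hσ0]
    · have hfun : (fun k ω => Y' (k + 1) ω - Y' k ω)
          = fun k => (fun v => σ v) ∘ (fun ω => Y (k + 1) ω - Y k ω) := by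
        funext k ω
        simp only [hY'def, Function.comp_apply, ← hσsub]
      rw [hfun]
      exact hY.indep.comp _ (fun k => Measurable.of_discrete)
    · intro k q
      have hset : {ω | Y' (k + 1) ω - Y' k ω = stepVec d q}
          = {ω | Y (k + 1) ω - Y k ω = stepVec d (e.symm q)} := by
        ext ω
        simp only [hY'def, Set.mem_setOf_eq, ← hσsub]
        constructor
        · intro h
          apply hσinj
          rw [hσe (e.symm q), Equiv.apply_symm_apply]
          exact h
        · intro h
          rw [h, hσe, Equiv.apply_symm_apply]
      rw [hset]
      exact hY.step k _
  have hTeq : ∀ ω, exitTime Y' ρ ω = exitTime Y ρ ω := by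
    intro ω
    unfold exitTime
    congr 1
    ext k
    simp only [hY'def, Set.mem_setOf_eq, hσn]
  have hnoEq : ∀ N, noExit Y' ρ N = noExit Y ρ N := by
    intro N
    unfold noExit
    ext ω
    simp only [hY'def, Set.mem_setOf_eq, hσn]
  have hC0 : 0 ≤ C := le_trans (abs_nonneg _) (hg 0)
  have key : ∀ N, |∫ ω, g (σ (Y (exitTime Y ρ ω) ω)) ∂P - ∫ ω, g (Y (exitTime Y ρ ω) ω) ∂P|
      ≤ 2 * C * (P (noExit Y ρ N)).toReal := by
    intro N
    have h1 := exit_integral_approx hY hd (ρ := ρ) N g hg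
    have h2 := exit_integral_approx hY' hd (ρ := ρ) N g hg
    rw [hnoEq N] at h2
    have hint_eq : (∫ ω, g (Y' (exitTime Y' ρ ω) ω) ∂P)
        = ∫ ω, g (σ (Y (exitTime Y ρ ω) ω)) ∂P := by
      refine integral_congr_ae (ae_of_all _ (fun ω => ?_))
      show g (Y' (exitTime Y' ρ ω) ω) = g (σ (Y (exitTime Y ρ ω) ω))
      rw [hTeq ω, hY'def]
    rw [hint_eq] at h2
    set S := ∑ p : Fin N → Fin d × Bool, ((2 * d : ℝ))⁻¹ ^ N * exitG ρ N g (pathF p)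
    calc |∫ ω, g (σ (Y (exitTime Y ρ ω) ω)) ∂P - ∫ ω, g (Y (exitTime Y ρ ω) ω) ∂P|
        ≤ |∫ ω, g (σ (Y (exitTime Y ρ ω) ω)) ∂P - S|
          + |S - ∫ ω, g (Y (exitTime Y ρ ω) ω) ∂P| := abs_sub_le _ _ _
      _ ≤ C * (P (noExit Y ρ N)).toReal + C * (P (noExit Y ρ N)).toReal :=
          add_le_add h2 (by rw [abs_sub_comm]; exact h1)
      _ = 2 * C * (P (noExit Y ρ N)).toReal := by ring
  have h2C : Tendsto (fun N => 2 * C * (P (noExit Y ρ N)).toReal) atTop (nhds 0) := by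
    have := (noExit_toReal_tendsto hY hd hρ).const_mul (2 * C)
    simpa using this
  have habs : |∫ ω, g (σ (Y (exitTime Y ρ ω) ω)) ∂P - ∫ ω, g (Y (exitTime Y ρ ω) ω) ∂P| ≤ 0 :=
    ge_of_tendsto' h2C key
  have := abs_nonneg (∫ ω, g (σ (Y (exitTime Y ρ ω) ω)) ∂P - ∫ ω, g (Y (exitTime Y ρ ω) ω) ∂P)
  have hz : ∫ ω, g (σ (Y (exitTime Y ρ ω) ω)) ∂P - ∫ ω, g (Y (exitTime Y ρ ω) ω) ∂P = 0 :=
    abs_eq_zero.mp (le_antisymm habs this)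
  linarith [hz]

end ExitIntegral

section Moments
variable {Ω : Type*} [MeasurableSpace Ω] {P : Measure Ω} [IsProbabilityMeasure P]
variable {d : ℕ} {Y : ℕ → Ω → (Fin d → ℤ)}

/-- generic signed-permutation symmetry of the exit point -/
lemma srw_sym_signed (hY : IsSRW P d Y) (hd : 0 < d) {ρ : ℝ} (hρ : 0 ≤ ρ)
    (π : Equiv.Perm (Fin d)) (ε : Fin d → Bool)
    (g : (Fin d → ℤ) → ℝ) {C : ℝ} (hg : ∀ x, |g x| ≤ C) :
    ∫ ω, g (fun t => if ε t then (Y (exitTime Y ρ ω) ω) (π t)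
        else -((Y (exitTime Y ρ ω) ω) (π t))) ∂P
      = ∫ ω, g (Y (exitTime Y ρ ω) ω) ∂P := by
  classical
  set σ : (Fin d → ℤ) → (Fin d → ℤ) :=
    fun x t => if ε t then x (π t) else -(x (π t)) with hσdef
  have hσsub : ∀ a b, σ (a - b) = σ a - σ b := by
    intro a b
    funext t
    simp only [hσdef, Pi.sub_apply]
    split <;> ring
  have hσ0 : σ 0 = 0 := by
    funext t
    simp only [hσdef, Pi.zero_apply]
    split <;> ring
  have hσinj : Function.Injective σ := by
    intro x y hxy
    funext s
    have h := congrFun hxy (π.symm s)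
    simp only [hσdef, Equiv.apply_symm_apply] at h
    split at h
    · exact h
    · exact neg_injective h
  have hσn : ∀ x, znorm (σ x) = znorm x := by
    intro x
    unfold znorm
    congr 1
    have : ∀ t, (((σ x t : ℤ) : ℝ)) ^ 2 = ((x (π t) : ℝ)) ^ 2 := by
      intro t
      simp only [hσdef]
      split <;> push_cast <;> ring
    rw [Finset.sum_congr rfl (fun t _ => this t)]
    exact Equiv.sum_comp π (fun s => ((x s : ℝ)) ^ 2)
  set e : Equiv.Perm (Fin d × Bool) :=
    { toFun := fun q => (π.symm q.1, if ε (π.symm q.1) then q.2 else !q.2)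
      invFun := fun r => (π r.1, if ε r.1 then r.2 else !r.2)
      left_inv := by
        intro q
        simp only [Equiv.apply_symm_apply]
        cases hv : ε (π.symm q.1) <;> simp [hv]
      right_inv := by
        intro r
        simp only [Equiv.symm_apply_apply]
        cases hv : ε r.1 <;> simp [hv] } with hedef
  have hσe : ∀ q, σ (stepVec d q) = stepVec d (e q) := by
    intro q
    funext t
    simp only [hσdef, hedef, stepVec, Equiv.coe_fn_mk]
    by_cases ht : π t = q.1
    · have ht' : t = π.symm q.1 := by rw [← ht, Equiv.symm_apply_apply]
      rw [if_pos ht, if_pos ht']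
      subst ht'
      cases hv : ε (π.symm q.1) <;> cases hq : q.2 <;> simp [hv, hq]
    · have ht' : t ≠ π.symm q.1 := fun h => ht (by rw [h, Equiv.apply_symm_apply])
      rw [if_neg ht, if_neg ht']
      split <;> ring
  exact srw_sym hY hd hρ σ hσinj hσsub hσ0 hσn e hσe g hg

/-- a.e. the increments are unit steps -/
lemma increments_ae (hY : IsSRW P d Y) (hd : 0 < d) :
    ∀ᵐ ω ∂P, ∀ k, ∃ q, Y (k + 1) ω - Y k ω = stepVec d q := by
  rw [ae_all_iff]
  intro k
  rw [ae_iff]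
  have hm : ∀ q : Fin d × Bool, MeasurableSet {ω | Y (k + 1) ω - Y k ω = stepVec d q} :=
    fun q => ((hY.meas _).sub (hY.meas _)) (MeasurableSet.of_discrete (s := {stepVec d q}))
  have hdisj : Pairwise (Function.onFun Disjoint
      (fun q : Fin d × Bool => {ω | Y (k + 1) ω - Y k ω = stepVec d q})) := by
    intro q q' hqq'
    rw [Function.onFun, Set.disjoint_left]
    intro ω h1 h2
    have e1 : Y (k + 1) ω - Y k ω = stepVec d q := h1
    have e2 : Y (k + 1) ω - Y k ω = stepVec d q' := h2
    exact hqq' (stepVec_injective (e1.symm.trans e2))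
  have h1 : P (⋃ q : Fin d × Bool, {ω | Y (k + 1) ω - Y k ω = stepVec d q}) = 1 := by
    rw [measure_iUnion hdisj hm, tsum_fintype]
    rw [Finset.sum_congr rfl (fun q _ => hY.step k q), Finset.sum_const, Finset.card_univ,
      Fintype.card_prod, Fintype.card_fin, Fintype.card_bool, nsmul_eq_mul]
    push_cast
    rw [show ((d : ℝ≥0∞) * 2) = 2 * d by ring]
    exact ENNReal.mul_inv_cancel (mul_ne_zero (by norm_num) (by exact_mod_cast hd.ne'))
      (by finiteness)
  have hcompl : {ω | ¬ ∃ q, Y (k + 1) ω - Y k ω = stepVec d q}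
      = (⋃ q : Fin d × Bool, {ω | Y (k + 1) ω - Y k ω = stepVec d q})ᶜ := by
    ext ω
    simp
  rw [hcompl, measure_compl (MeasurableSet.iUnion hm) (measure_ne_top _ _), h1, measure_univ,
    tsub_self]

/-- a.e. bounds on the exit point -/
lemma W_facts (hY : IsSRW P d Y) (hd : 0 < d) {ρ : ℝ} (hρ : 0 ≤ ρ) :
    ∀ᵐ ω ∂P, ρ < znorm (Y (exitTime Y ρ ω) ω) ∧ znorm (Y (exitTime Y ρ ω) ω) ≤ ρ + 1 := by
  filter_upwards [exit_ae hY hd hρ, increments_ae hY hd] with ω hex hstep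
  have hT : ρ < znorm (Y (exitTime Y ρ ω) ω) := Nat.sInf_mem hex
  refine ⟨hT, ?_⟩
  have hT0 : exitTime Y ρ ω ≠ 0 := by
    intro h0
    rw [h0, hY.init, znorm_zero] at hT
    linarith
  obtain ⟨T', hT'⟩ : ∃ T', exitTime Y ρ ω = T' + 1 := ⟨exitTime Y ρ ω - 1, by omega⟩
  have hlt : T' < exitTime Y ρ ω := by omega
  have hnot : ¬ ρ < znorm (Y T' ω) :=
    Nat.notMem_of_lt_sInf (show T' < sInf {k | ρ < znorm (Y k ω)} from hlt)
  obtain ⟨q, hq⟩ := hstep T'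
  have hb := znorm_add_step_le (Y T' ω) (Y (T' + 1) ω) q hq
  rw [← hT'] at hb
  have := not_lt.mp hnot
  linarith

lemma int_Wij_zero (hY : IsSRW P d Y) (hd : 0 < d) {ρ : ℝ} (hρ : 0 ≤ ρ) {i j : Fin d}
    (hij : i ≠ j) :
    ∫ ω, ((Y (exitTime Y ρ ω) ω i : ℝ) * (Y (exitTime Y ρ ω) ω j : ℝ)) ∂P = 0 := by
  classical
  set B := ρ + 1 with hBdef
  set g : (Fin d → ℤ) → ℝ := fun x => if znorm x ≤ B then ((x i : ℝ)) * ((x j : ℝ)) else 0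
    with hgdef
  have hB0 : 0 ≤ B := by rw [hBdef]; linarith
  have hg : ∀ x, |g x| ≤ B * B := by
    intro x
    show |if znorm x ≤ B then ((x i : ℝ)) * ((x j : ℝ)) else 0| ≤ B * B
    by_cases hx : znorm x ≤ B
    · rw [if_pos hx, abs_mul]
      exact mul_le_mul (le_trans (abs_coord_le_znorm x i) hx)
        (le_trans (abs_coord_le_znorm x j) hx) (abs_nonneg _) hB0
    · rw [if_neg hx, abs_zero]; positivity
  have hsym := srw_sym_signed hY hd hρ (Equiv.refl (Fin d))
    (fun t => !(decide (t = i))) g hg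
  have hflip : ∀ x : Fin d → ℤ,
      g (fun t => if !(decide (t = i)) then x t else -(x t)) = - g x := by
    intro x
    set x' : Fin d → ℤ := fun t => if !(decide (t = i)) then x t else -(x t) with hx'def
    have hnorm : znorm x' = znorm x := by
      unfold znorm
      congr 1
      refine Finset.sum_congr rfl fun t _ => ?_
      show ((if !(decide (t = i)) then x t else -(x t) : ℤ) : ℝ) ^ 2 = ((x t : ℝ)) ^ 2
      split <;> push_cast <;> ring
    have hxi : x' i = - x i := by
      show (if !(decide (i = i)) then x i else -(x i)) = - x i
      simp
    have hxj : x' j = x j := by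
      show (if !(decide (j = i)) then x j else -(x j)) = x j
      simp [Ne.symm hij]
    show (if znorm x' ≤ B then ((x' i : ℝ)) * ((x' j : ℝ)) else 0)
        = - (if znorm x ≤ B then ((x i : ℝ)) * ((x j : ℝ)) else 0)
    by_cases hxB : znorm x ≤ B
    · rw [if_pos (show znorm x' ≤ B by rw [hnorm]; exact hxB), if_pos hxB, hxi, hxj]
      push_cast
      ring
    · rw [if_neg (show ¬ znorm x' ≤ B by rw [hnorm]; exact hxB), if_neg hxB, neg_zero]
  have hneg : ∫ ω, (- g (Y (exitTime Y ρ ω) ω)) ∂P = ∫ ω, g (Y (exitTime Y ρ ω) ω) ∂P := by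
    rw [← hsym]
    exact integral_congr_ae (ae_of_all _ (fun ω => (hflip (Y (exitTime Y ρ ω) ω)).symm))
  rw [integral_neg] at hneg
  have hgzero : ∫ ω, g (Y (exitTime Y ρ ω) ω) ∂P = 0 := by linarith
  rw [← hgzero]
  apply integral_congr_ae
  filter_upwards [W_facts hY hd hρ] with ω hω
  show ((Y (exitTime Y ρ ω) ω i : ℝ)) * ((Y (exitTime Y ρ ω) ω j : ℝ))
      = if znorm (Y (exitTime Y ρ ω) ω) ≤ B then
          ((Y (exitTime Y ρ ω) ω i : ℝ)) * ((Y (exitTime Y ρ ω) ω j : ℝ)) else 0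
  rw [if_pos (show znorm (Y (exitTime Y ρ ω) ω) ≤ B by rw [hBdef]; exact hω.2)]

lemma int_Wii_eq (hY : IsSRW P d Y) (hd : 0 < d) {ρ : ℝ} (hρ : 0 ≤ ρ) (i j : Fin d) :
    ∫ ω, ((Y (exitTime Y ρ ω) ω i : ℝ)) ^ 2 ∂P
      = ∫ ω, ((Y (exitTime Y ρ ω) ω j : ℝ)) ^ 2 ∂P := by
  classical
  set B := ρ + 1 with hBdef
  have hB0 : 0 ≤ B := by rw [hBdef]; linarith
  set gi : (Fin d → ℤ) → ℝ := fun x => if znorm x ≤ B then ((x i : ℝ)) ^ 2 else 0 with hgidef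
  set gj : (Fin d → ℤ) → ℝ := fun x => if znorm x ≤ B then ((x j : ℝ)) ^ 2 else 0 with hgjdef
  have hg : ∀ x, |gi x| ≤ B * B := by
    intro x
    show |if znorm x ≤ B then ((x i : ℝ)) ^ 2 else 0| ≤ B * B
    by_cases hx : znorm x ≤ B
    · rw [if_pos hx]
      have h1 : |((x i : ℝ))| ≤ B := le_trans (abs_coord_le_znorm x i) hx
      rw [abs_of_nonneg (sq_nonneg _), ← sq_abs]
      nlinarith [abs_nonneg ((x i : ℝ))]
    · rw [if_neg hx, abs_zero]; positivity
  have hsym := srw_sym_signed hY hd hρ (Equiv.swap i j) (fun _ => true) gi hg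
  have hswap : ∀ x : Fin d → ℤ, gi (fun t => if (true : Bool) then x (Equiv.swap i j t)
      else -(x (Equiv.swap i j t))) = gj x := by
    intro x
    set x' : Fin d → ℤ := fun t => if (true : Bool) then x (Equiv.swap i j t)
      else -(x (Equiv.swap i j t)) with hx'
    have hx'' : ∀ t, x' t = x (Equiv.swap i j t) := by intro t; rw [hx']; simp
    have hnorm : znorm x' = znorm x := by
      unfold znorm
      congr 1
      rw [Finset.sum_congr rfl (fun t _ => by rw [hx'' t])]
      exact Equiv.sum_comp (Equiv.swap i j) (fun s => ((x s : ℝ)) ^ 2)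
    show (if znorm x' ≤ B then ((x' i : ℝ)) ^ 2 else 0)
        = (if znorm x ≤ B then ((x j : ℝ)) ^ 2 else 0)
    by_cases hxB : znorm x ≤ B
    · rw [if_pos (show znorm x' ≤ B by rw [hnorm]; exact hxB), if_pos hxB,
        hx'' i, Equiv.swap_apply_left]
    · rw [if_neg (show ¬ znorm x' ≤ B by rw [hnorm]; exact hxB), if_neg hxB]
  have h1 : ∫ ω, gj (Y (exitTime Y ρ ω) ω) ∂P = ∫ ω, gi (Y (exitTime Y ρ ω) ω) ∂P := by
    rw [← hsym]
    exact integral_congr_ae (ae_of_all _ (fun ω => (hswap _).symm))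
  have h2 : ∫ ω, ((Y (exitTime Y ρ ω) ω i : ℝ)) ^ 2 ∂P
      = ∫ ω, gi (Y (exitTime Y ρ ω) ω) ∂P := by
    apply integral_congr_ae
    filter_upwards [W_facts hY hd hρ] with ω hω
    show ((Y (exitTime Y ρ ω) ω i : ℝ)) ^ 2
        = if znorm (Y (exitTime Y ρ ω) ω) ≤ B then ((Y (exitTime Y ρ ω) ω i : ℝ)) ^ 2 else 0
    rw [if_pos (show znorm (Y (exitTime Y ρ ω) ω) ≤ B by rw [hBdef]; exact hω.2)]
  have h3 : ∫ ω, ((Y (exitTime Y ρ ω) ω j : ℝ)) ^ 2 ∂P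
      = ∫ ω, gj (Y (exitTime Y ρ ω) ω) ∂P := by
    apply integral_congr_ae
    filter_upwards [W_facts hY hd hρ] with ω hω
    show ((Y (exitTime Y ρ ω) ω j : ℝ)) ^ 2
        = if znorm (Y (exitTime Y ρ ω) ω) ≤ B then ((Y (exitTime Y ρ ω) ω j : ℝ)) ^ 2 else 0
    rw [if_pos (show znorm (Y (exitTime Y ρ ω) ω) ≤ B by rw [hBdef]; exact hω.2)]
  rw [h2, h3, h1]

lemma int_dot_zero (hY : IsSRW P d Y) (hd : 0 < d) {ρ : ℝ} (hρ : 0 ≤ ρ) (ξ : Fin d → ℝ) :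
    ∫ ω, (∑ a, ξ a * ((Y (exitTime Y ρ ω) ω a : ℝ))) ∂P = 0 := by
  classical
  set B := ρ + 1 with hBdef
  have hB0 : 0 ≤ B := by rw [hBdef]; linarith
  set g : (Fin d → ℤ) → ℝ := fun x => if znorm x ≤ B then (∑ a, ξ a * ((x a : ℝ))) else 0
    with hgdef
  have hg : ∀ x, |g x| ≤ Real.sqrt (∑ a, ξ a ^ 2) * B := by
    intro x
    show |if znorm x ≤ B then (∑ a, ξ a * ((x a : ℝ))) else 0| ≤ Real.sqrt (∑ a, ξ a ^ 2) * B
    by_cases hx : znorm x ≤ B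
    · rw [if_pos hx]
      exact le_trans (abs_dot_le ξ x)
        (mul_le_mul_of_nonneg_left hx (Real.sqrt_nonneg _))
    · rw [if_neg hx, abs_zero]; positivity
  have hsym := srw_sym_signed hY hd hρ (Equiv.refl (Fin d)) (fun _ => false) g hg
  have hflip : ∀ x : Fin d → ℤ, g (fun t => if (false : Bool) then x ((Equiv.refl (Fin d)) t)
      else -(x ((Equiv.refl (Fin d)) t))) = - g x := by
    intro x
    set x' : Fin d → ℤ := fun t => if (false : Bool) then x ((Equiv.refl (Fin d)) t)
      else -(x ((Equiv.refl (Fin d)) t)) with hx'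
    have hx'' : ∀ t, x' t = -(x t) := by intro t; rw [hx']; simp
    have hnorm : znorm x' = znorm x := by
      unfold znorm
      congr 1
      refine Finset.sum_congr rfl fun t _ => ?_
      rw [hx'' t]
      push_cast
      ring
    show (if znorm x' ≤ B then (∑ a, ξ a * ((x' a : ℝ))) else 0)
        = - (if znorm x ≤ B then (∑ a, ξ a * ((x a : ℝ))) else 0)
    by_cases hxB : znorm x ≤ B
    · rw [if_pos (show znorm x' ≤ B by rw [hnorm]; exact hxB), if_pos hxB]
      rw [← Finset.sum_neg_distrib]
      refine Finset.sum_congr rfl fun a _ => ?_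
      rw [hx'' a]
      push_cast
      ring
    · rw [if_neg (show ¬ znorm x' ≤ B by rw [hnorm]; exact hxB), if_neg hxB, neg_zero]
  have hneg : ∫ ω, (- g (Y (exitTime Y ρ ω) ω)) ∂P = ∫ ω, g (Y (exitTime Y ρ ω) ω) ∂P := by
    rw [← hsym]
    exact integral_congr_ae (ae_of_all _ (fun ω => (hflip (Y (exitTime Y ρ ω) ω)).symm))
  rw [integral_neg] at hneg
  have hgzero : ∫ ω, g (Y (exitTime Y ρ ω) ω) ∂P = 0 := by linarith
  rw [← hgzero]
  apply integral_congr_ae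
  filter_upwards [W_facts hY hd hρ] with ω hω
  show (∑ a, ξ a * ((Y (exitTime Y ρ ω) ω a : ℝ)))
      = if znorm (Y (exitTime Y ρ ω) ω) ≤ B then
          (∑ a, ξ a * ((Y (exitTime Y ρ ω) ω a : ℝ))) else 0
  rw [if_pos (show znorm (Y (exitTime Y ρ ω) ω) ≤ B by rw [hBdef]; exact hω.2)]

end Moments

section Moments2
variable {Ω : Type*} [MeasurableSpace Ω] {P : Measure Ω} [IsProbabilityMeasure P]
variable {d : ℕ} {Y : ℕ → Ω → (Fin d → ℤ)}

lemma integrable_Wij (hY : IsSRW P d Y) (hd : 0 < d) {ρ : ℝ} (hρ : 0 ≤ ρ) (i j : Fin d) :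
    Integrable (fun ω => ((Y (exitTime Y ρ ω) ω i : ℝ)) * ((Y (exitTime Y ρ ω) ω j : ℝ))) P := by
  apply integrable_of_bdd (C := (ρ + 1) * (ρ + 1))
  · have hcomp : (fun ω => ((Y (exitTime Y ρ ω) ω i : ℝ)) * ((Y (exitTime Y ρ ω) ω j : ℝ)))
        = (fun v : Fin d → ℤ => ((v i : ℝ)) * ((v j : ℝ)))
          ∘ (fun ω => Y (exitTime Y ρ ω) ω) := rfl
    rw [hcomp]
    exact Measurable.of_discrete.comp (measurable_W hY ρ)
  · filter_upwards [W_facts hY hd hρ] with ω hω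
    rw [abs_mul]
    exact mul_le_mul (le_trans (abs_coord_le_znorm _ _) hω.2)
      (le_trans (abs_coord_le_znorm _ _) hω.2) (abs_nonneg _) (by linarith)

lemma integrable_znormsq (hY : IsSRW P d Y) (hd : 0 < d) {ρ : ℝ} (hρ : 0 ≤ ρ) :
    Integrable (fun ω => znorm (Y (exitTime Y ρ ω) ω) ^ 2) P := by
  have hm : Measurable (fun ω => znorm (Y (exitTime Y ρ ω) ω) ^ 2) := by
    have hcomp : (fun ω => znorm (Y (exitTime Y ρ ω) ω) ^ 2)
        = (fun v : Fin d → ℤ => znorm v ^ 2) ∘ (fun ω => Y (exitTime Y ρ ω) ω) := rfl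
    rw [hcomp]
    exact Measurable.of_discrete.comp (measurable_W hY ρ)
  apply integrable_of_bdd hm (C := (ρ + 1) ^ 2)
  filter_upwards [W_facts hY hd hρ] with ω hω
  rw [abs_of_nonneg (sq_nonneg _)]
  have h0 := znorm_nonneg (Y (exitTime Y ρ ω) ω)
  nlinarith [hω.2]

lemma int_dot_sq (hY : IsSRW P d Y) (hd : 0 < d) {ρ : ℝ} (hρ : 0 ≤ ρ) (ξ : Fin d → ℝ) :
    ∫ ω, (∑ a, ξ a * ((Y (exitTime Y ρ ω) ω a : ℝ))) ^ 2 ∂P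
      = (∑ a, ξ a ^ 2) / d * ∫ ω, znorm (Y (exitTime Y ρ ω) ω) ^ 2 ∂P := by
  classical
  set i0 : Fin d := ⟨0, hd⟩ with hi0
  set v := ∫ ω, ((Y (exitTime Y ρ ω) ω i0 : ℝ)) ^ 2 ∂P with hvdef
  have hintsq : ∀ a : Fin d, Integrable (fun ω => ((Y (exitTime Y ρ ω) ω a : ℝ)) ^ 2) P := by
    intro a
    have heq : (fun ω => ((Y (exitTime Y ρ ω) ω a : ℝ)) ^ 2)
        = fun ω => ((Y (exitTime Y ρ ω) ω a : ℝ)) * ((Y (exitTime Y ρ ω) ω a : ℝ)) := by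
      funext ω; ring
    rw [heq]
    exact integrable_Wij hY hd hρ a a
  have hzn : ∫ ω, znorm (Y (exitTime Y ρ ω) ω) ^ 2 ∂P = d * v := by
    have hpt : ∀ ω, znorm (Y (exitTime Y ρ ω) ω) ^ 2
        = ∑ a, ((Y (exitTime Y ρ ω) ω a : ℝ)) ^ 2 := fun ω => znorm_sq _
    rw [integral_congr_ae (ae_of_all _ hpt),
      integral_finset_sum _ (fun a _ => hintsq a),
      Finset.sum_congr rfl (fun a _ => int_Wii_eq hY hd hρ a i0),
      Finset.sum_const, Finset.card_univ, Fintype.card_fin, nsmul_eq_mul]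
  have hsq : ∀ ω, (∑ a, ξ a * ((Y (exitTime Y ρ ω) ω a : ℝ))) ^ 2
      = ∑ a, ∑ b, (ξ a * ξ b) * (((Y (exitTime Y ρ ω) ω a : ℝ))
          * ((Y (exitTime Y ρ ω) ω b : ℝ))) := by
    intro ω
    rw [sq, Finset.sum_mul_sum]
    exact Finset.sum_congr rfl fun a _ => Finset.sum_congr rfl fun b _ => by ring
  rw [integral_congr_ae (ae_of_all _ hsq),
    integral_finset_sum _ (fun a _ => integrable_finset_sum _
      (fun b _ => (integrable_Wij hY hd hρ a b).const_mul _)),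
    Finset.sum_congr rfl (fun a _ => integral_finset_sum _
      (fun b _ => (integrable_Wij hY hd hρ a b).const_mul _)),
    Finset.sum_congr rfl (fun a _ => Finset.sum_congr rfl
      (fun b _ => integral_const_mul _ _))]
  have heval : ∀ a b : Fin d, (ξ a * ξ b) * ∫ ω, ((Y (exitTime Y ρ ω) ω a : ℝ))
      * ((Y (exitTime Y ρ ω) ω b : ℝ)) ∂P = (if a = b then ξ a ^ 2 * v else 0) := by
    intro a b
    rcases eq_or_ne a b with hab | hab
    · subst hab
      rw [if_pos rfl]
      have h1 : ∫ ω, ((Y (exitTime Y ρ ω) ω a : ℝ)) * ((Y (exitTime Y ρ ω) ω a : ℝ)) ∂P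
          = ∫ ω, ((Y (exitTime Y ρ ω) ω a : ℝ)) ^ 2 ∂P := by
        apply integral_congr_ae (ae_of_all _ (fun ω => ?_))
        ring
      rw [h1, int_Wii_eq hY hd hρ a i0, ← hvdef]
      ring
    · rw [if_neg hab, int_Wij_zero hY hd hρ hab, mul_zero]
  rw [Finset.sum_congr rfl (fun a _ => Finset.sum_congr rfl (fun b _ => heval a b))]
  have hdiag : ∀ a : Fin d, (∑ b, if a = b then ξ a ^ 2 * v else 0) = ξ a ^ 2 * v := by
    intro a
    rw [Finset.sum_ite_eq Finset.univ a (fun _ => ξ a ^ 2 * v), if_pos (Finset.mem_univ a)]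
  rw [Finset.sum_congr rfl (fun a _ => hdiag a), ← Finset.sum_mul, hzn]
  have hd' : (d : ℝ) ≠ 0 := by exact_mod_cast hd.ne'
  field_simp

lemma u_bounds (hY : IsSRW P d Y) (hd : 0 < d) {ρ : ℝ} (hρ1 : 1 ≤ ρ) :
    ρ ^ 2 ≤ (∫ ω, znorm (Y (exitTime Y ρ ω) ω) ^ 2 ∂P)
      ∧ (∫ ω, znorm (Y (exitTime Y ρ ω) ω) ^ 2 ∂P) ≤ (ρ + 1) ^ 2 := by
  have hρ0 : (0 : ℝ) ≤ ρ := by linarith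
  have hint := integrable_znormsq hY hd hρ0
  constructor
  · have h1 : ∫ (_ : Ω), ρ ^ 2 ∂P = ρ ^ 2 := by simp
    rw [← h1]
    apply integral_mono_ae (integrable_const _) hint
    filter_upwards [W_facts hY hd hρ0] with ω hω
    have h0 := znorm_nonneg (Y (exitTime Y ρ ω) ω)
    nlinarith [hω.1]
  · have h1 : ∫ (_ : Ω), (ρ + 1) ^ 2 ∂P = (ρ + 1) ^ 2 := by simp
    rw [← h1]
    apply integral_mono_ae hint (integrable_const _)
    filter_upwards [W_facts hY hd hρ0] with ω hω
    have h0 := znorm_nonneg (Y (exitTime Y ρ ω) ω)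
    nlinarith [hω.2]

lemma final_step (hY : IsSRW P d Y) (hd : 0 < d) {ρ h : ℝ} (hρ1 : 1 ≤ ρ) (ξ : Fin d → ℝ)
    (hh1 : 1 ≤ h) (hh2 : 2 * Real.sqrt (∑ i, ξ i ^ 2) ≤ h) :
    |h ^ 2 * (1 - ∫ ω, Real.exp (-(∑ i, ξ i * ((Y (exitTime Y ρ ω) ω i : ℝ))) / (ρ * h)) ∂P)
        + (∑ i, ξ i ^ 2) / (2 * d)
          * ((∫ ω, znorm (Y (exitTime Y ρ ω) ω) ^ 2 ∂P) / ρ ^ 2)|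
      ≤ 8 * Real.sqrt (∑ i, ξ i ^ 2) ^ 3 / h := by
  classical
  have hρ0 : (0 : ℝ) < ρ := by linarith
  have hh0 : (0 : ℝ) < h := by linarith
  have hρh : (0 : ℝ) < ρ * h := by positivity
  set s := ∑ i, ξ i ^ 2 with hsdef
  have hs0 : (0 : ℝ) ≤ s := Finset.sum_nonneg fun i _ => sq_nonneg _
  set Z : Ω → ℝ := fun ω => (∑ i, ξ i * ((Y (exitTime Y ρ ω) ω i : ℝ))) / (ρ * h) with hZdef
  set c := Real.sqrt s * (ρ + 1) / (ρ * h) with hcdef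
  have hc0 : 0 ≤ c := by positivity
  have hc2 : c ≤ 2 * Real.sqrt s / h := by
    rw [hcdef, div_le_div_iff₀ hρh hh0]
    nlinarith [mul_nonneg (mul_nonneg (Real.sqrt_nonneg s) hh0.le) (by linarith : (0:ℝ) ≤ ρ - 1)]
  have hc1 : c ≤ 1 := by
    have : 2 * Real.sqrt s / h ≤ 1 := by
      rw [div_le_one hh0]; exact hh2
    linarith
  have hZme : Measurable Z := by
    have hcomp : Z = (fun v : Fin d → ℤ => (∑ i, ξ i * ((v i : ℝ))) / (ρ * h))
        ∘ (fun ω => Y (exitTime Y ρ ω) ω) := rfl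
    rw [hcomp]
    exact Measurable.of_discrete.comp (measurable_W hY ρ)
  have hZb : ∀ᵐ ω ∂P, |Z ω| ≤ c := by
    filter_upwards [W_facts hY hd (by linarith : (0:ℝ) ≤ ρ)] with ω hω
    rw [hZdef, hcdef, abs_div, abs_of_pos hρh]
    gcongr
    exact le_trans (abs_dot_le ξ (Y (exitTime Y ρ ω) ω))
      (mul_le_mul_of_nonneg_left hω.2 (Real.sqrt_nonneg _))
  have hZint : Integrable Z P := integrable_of_bdd hZme hZb
  have hZsqint : Integrable (fun ω => Z ω ^ 2) P := by
    apply integrable_of_bdd (hZme.pow_const 2) (C := c ^ 2)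
    filter_upwards [hZb] with ω hω
    rw [abs_of_nonneg (sq_nonneg _), ← sq_abs]
    exact pow_le_pow_left₀ (abs_nonneg _) hω 2
  have hexpme : Measurable (fun ω => Real.exp (-Z ω)) := Real.measurable_exp.comp hZme.neg
  have hexpint : Integrable (fun ω => Real.exp (-Z ω)) P := by
    apply integrable_of_bdd hexpme (C := Real.exp 1)
    filter_upwards [hZb] with ω hω
    rw [abs_of_pos (Real.exp_pos _)]
    apply Real.exp_le_exp.mpr
    have := abs_le.mp hω
    linarith
  set R : Ω → ℝ := fun ω => Real.exp (-Z ω) - (1 - Z ω + Z ω ^ 2 / 2) with hRdef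
  have hRint : Integrable R P := by
    rw [hRdef]
    exact hexpint.sub (((integrable_const 1).sub hZint).add (hZsqint.div_const 2))
  have hRb : ∀ᵐ ω ∂P, |R ω| ≤ c ^ 3 := by
    filter_upwards [hZb] with ω hω
    have h1 : |(-Z ω)| ≤ 1 := by rw [abs_neg]; exact le_trans hω hc1
    have h2 := Real.exp_bound h1 (n := 3) (by norm_num)
    have h3 : ∑ m ∈ Finset.range 3, (-Z ω) ^ m / (Nat.factorial m) = 1 - Z ω + Z ω ^ 2 / 2 := by
      simp [Finset.sum_range_succ, Nat.factorial]
      ring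
    rw [h3] at h2
    have h4 : |(-Z ω)| ^ 3 * ((3 : ℕ).succ / ((Nat.factorial 3) * (3 : ℕ)))
        ≤ c ^ 3 * 1 := by
      apply mul_le_mul
      · rw [abs_neg]; exact pow_le_pow_left₀ (abs_nonneg _) hω 3
      · norm_num [Nat.factorial]
      · positivity
      · positivity
    rw [mul_one] at h4
    exact le_trans h2 h4
  -- moment identities
  have hZzero : ∫ ω, Z ω ∂P = 0 := by
    rw [hZdef]
    rw [integral_div, int_dot_zero hY hd (by linarith) ξ, zero_div]
  have hZsq : ∫ ω, Z ω ^ 2 ∂P = s / d * (∫ ω, znorm (Y (exitTime Y ρ ω) ω) ^ 2 ∂P)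
      / (ρ * h) ^ 2 := by
    have hpt : ∀ ω, Z ω ^ 2 = (∑ i, ξ i * ((Y (exitTime Y ρ ω) ω i : ℝ))) ^ 2 / (ρ * h) ^ 2 := by
      intro ω
      rw [hZdef, div_pow]
    rw [integral_congr_ae (ae_of_all _ hpt), integral_div, int_dot_sq hY hd (by linarith) ξ]
  -- expansion of the target integral
  have hIeq : (∫ ω, Real.exp (-(∑ i, ξ i * ((Y (exitTime Y ρ ω) ω i : ℝ))) / (ρ * h)) ∂P)
      = ∫ ω, Real.exp (-Z ω) ∂P := by
    apply integral_congr_ae (ae_of_all _ (fun ω => ?_))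
    rw [hZdef, neg_div]
  have hpint : Integrable (fun ω => 1 - Z ω + Z ω ^ 2 / 2) P :=
    ((integrable_const 1).sub hZint).add (hZsqint.div_const 2)
  have hsplit : ∫ ω, Real.exp (-Z ω) ∂P
      = (∫ ω, (1 - Z ω + Z ω ^ 2 / 2) ∂P) + ∫ ω, R ω ∂P := by
    rw [← integral_add hpint hRint]
    apply integral_congr_ae (ae_of_all _ (fun ω => ?_))
    simp only [hRdef]
    ring
  have hpoly : ∫ ω, (1 - Z ω + Z ω ^ 2 / 2) ∂P = 1 + (∫ ω, Z ω ^ 2 ∂P) / 2 := by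
    have h1 : Integrable (fun ω => 1 - Z ω) P := (integrable_const 1).sub hZint
    have h2 : Integrable (fun ω => Z ω ^ 2 / 2) P := hZsqint.div_const 2
    have h3 : Integrable (fun _ : Ω => (1 : ℝ)) P := integrable_const 1
    rw [integral_add h1 h2, integral_sub h3 hZint, hZzero, integral_div, integral_const]
    simp
  have hRsmall : |∫ ω, R ω ∂P| ≤ c ^ 3 := by
    have h1 : |∫ ω, R ω ∂P| ≤ ∫ ω, |R ω| ∂P := by
      simpa [Real.norm_eq_abs] using norm_integral_le_integral_norm (μ := P) R
    have h2 : ∫ ω, |R ω| ∂P ≤ ∫ (_ : Ω), c ^ 3 ∂P := by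
      apply integral_mono_ae hRint.abs (integrable_const _) hRb
    have h3 : ∫ (_ : Ω), c ^ 3 ∂P = c ^ 3 := by simp
    linarith
  -- final algebra
  set J := ∫ ω, znorm (Y (exitTime Y ρ ω) ω) ^ 2 ∂P with hJdef
  have hmain : h ^ 2 * (1 - ∫ ω, Real.exp (-(∑ i, ξ i * ((Y (exitTime Y ρ ω) ω i : ℝ)))
      / (ρ * h)) ∂P) + s / (2 * d) * (J / ρ ^ 2) = - h ^ 2 * ∫ ω, R ω ∂P := by
    rw [hIeq, hsplit, hpoly, hZsq]
    have hd' : (d : ℝ) ≠ 0 := by exact_mod_cast hd.ne'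
    field_simp
    ring
  rw [hmain]
  have hc3 : c ^ 3 ≤ (2 * Real.sqrt s / h) ^ 3 := pow_le_pow_left₀ hc0 hc2 3
  calc |- h ^ 2 * ∫ ω, R ω ∂P| = h ^ 2 * |∫ ω, R ω ∂P| := by
        rw [abs_mul, abs_neg, abs_of_nonneg (sq_nonneg h)]
    _ ≤ h ^ 2 * (2 * Real.sqrt s / h) ^ 3 := by
        apply mul_le_mul_of_nonneg_left (le_trans hRsmall hc3) (sq_nonneg h)
    _ = 8 * Real.sqrt s ^ 3 / h := by
        field_simp
        ring

end Moments2

theorem stmt_2 {Ω : Type*} [MeasurableSpace Ω] (P : Measure Ω) [IsProbabilityMeasure P]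
    (d : ℕ) (hd : 2 ≤ d) (Y : ℕ → Ω → (Fin d → ℤ)) (hY : IsSRW P d Y)
    (ξ : Fin d → ℝ) (ρ h : ℕ → ℝ)
    (hρ : Tendsto ρ atTop atTop) (hh : Tendsto h atTop atTop) :
    Tendsto (fun n => (h n) ^ 2 *
        (1 - ∫ ω, Real.exp (-(∑ i, ξ i * ((Y (exitTime Y (ρ n) ω) ω i : ℝ))) / (ρ n * h n)) ∂P))
      atTop (nhds (-(∑ i, (ξ i) ^ 2) / (2 * d))) := by
  have hd0 : 0 < d := by omega
  set s := ∑ i, (ξ i) ^ 2 with hsdef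
  set F : ℕ → ℝ := fun n => (h n) ^ 2 *
      (1 - ∫ ω, Real.exp (-(∑ i, ξ i * ((Y (exitTime Y (ρ n) ω) ω i : ℝ))) / (ρ n * h n)) ∂P)
    with hFdef
  set u : ℕ → ℝ := fun n => (∫ ω, znorm (Y (exitTime Y (ρ n) ω) ω) ^ 2 ∂P) / (ρ n) ^ 2
    with hudef
  have hev : ∀ᶠ n in atTop, 1 ≤ ρ n ∧ (1 ≤ h n ∧ 2 * Real.sqrt s ≤ h n) :=
    (hρ.eventually_ge_atTop 1).and ((hh.eventually_ge_atTop 1).and (hh.eventually_ge_atTop _))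
  have hkey : ∀ᶠ n in atTop, |F n - (-(s / (2 * d)) * u n)| ≤ 8 * Real.sqrt s ^ 3 / h n := by
    filter_upwards [hev] with n hn
    have hfs := final_step hY hd0 hn.1 ξ hn.2.1 hn.2.2
    rw [hFdef, neg_mul, sub_neg_eq_add]
    exact hfs
  have hu1 : Tendsto u atTop (nhds 1) := by
    have hub : ∀ᶠ n in atTop, u n ≤ (1 + (ρ n)⁻¹) ^ 2 := by
      filter_upwards [hev] with n hn
      have hb := (u_bounds hY hd0 hn.1).2
      have hρ0 : (0 : ℝ) < ρ n := by linarith [hn.1]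
      rw [hudef]
      rw [div_le_iff₀ (by positivity)]
      calc (∫ ω, znorm (Y (exitTime Y (ρ n) ω) ω) ^ 2 ∂P) ≤ (ρ n + 1) ^ 2 := hb
        _ = (1 + (ρ n)⁻¹) ^ 2 * (ρ n) ^ 2 := by field_simp
    have hlb : ∀ᶠ n in atTop, 1 ≤ u n := by
      filter_upwards [hev] with n hn
      have hb := (u_bounds hY hd0 hn.1).1
      have hρ0 : (0 : ℝ) < ρ n := by linarith [hn.1]
      rw [hudef, le_div_iff₀ (by positivity), one_mul]
      exact hb
    have hinv : Tendsto (fun n => (ρ n)⁻¹) atTop (nhds 0) := hρ.inv_tendsto_atTop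
    have hsq : Tendsto (fun n => (1 + (ρ n)⁻¹) ^ 2) atTop (nhds 1) := by
      have := ((tendsto_const_nhds (x := (1 : ℝ)) (f := atTop)).add hinv).pow 2
      simpa using this
    exact tendsto_of_tendsto_of_tendsto_of_le_of_le' tendsto_const_nhds hsq hlb hub
  have herr : Tendsto (fun n => 8 * Real.sqrt s ^ 3 / h n) atTop (nhds 0) :=
    Tendsto.div_atTop tendsto_const_nhds hh
  have hdiff : Tendsto (fun n => F n - (-(s / (2 * d)) * u n)) atTop (nhds 0) :=
    squeeze_zero_norm' (by filter_upwards [hkey] with n hn; rwa [Real.norm_eq_abs]) herr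
  have hmain : Tendsto (fun n => -(s / (2 * d)) * u n) atTop (nhds (-(s / (2 * d)))) := by
    have := hu1.const_mul (-(s / (2 * (d : ℝ))))
    simpa using this
  have hfinal := hmain.add hdiff
  have hfun : (fun n => -(s / (2 * (d : ℝ))) * u n + (F n - -(s / (2 * d)) * u n)) = F := by
    funext n
    ring
  rw [hfun] at hfinal
  have hlim : -(s / (2 * (d : ℝ))) + 0 = -s / (2 * (d : ℝ)) := by ring
  rw [hlim] at hfinal
  exact hfinal
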